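/- Let v, w be vectors in a real inner product space with ⟨v,w⟩ ≥ 0. Then |v|²|w|² − ⟨v,w⟩² ≥ (|v|²/2)·| (|w|/|v|)·v − w |² (where the right-hand side is interpreted as 0 if v = 0). -/

import Mathlib

open scoped RealInnerProductSpace

theorem inner_deficit_lower_bound {V : Type*} [NormedAddCommGroup V]
    [InnerProductSpace ℝ V] (v w : V) (hv : v ≠ 0) (h : 0 ≤ ⟪v, w⟫) :
    ‖v‖ ^ 2 / 2 * ‖(‖w‖ / ‖v‖) • v - w‖ ^ 2 ≤
      ‖v‖ ^ 2 * ‖w‖ ^ 2 - ⟪v, w⟫ ^ 2 := by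
  have ha : ‖v‖ ≠ 0 := norm_ne_zero_iff.mpr hv
  have ha' : 0 < ‖v‖ := norm_pos_iff.mpr hv
  have h1 : ⟪v, w⟫ ≤ ‖v‖ * ‖w‖ := real_inner_le_norm v w
  have h2 : @norm ℝ _ (‖w‖ / ‖v‖) = ‖w‖ / ‖v‖ := by
    rw [Real.norm_eq_abs, abs_of_nonneg (by positivity)]
  rw [norm_sub_sq_real, real_inner_smul_left, norm_smul, h2]
  have hw : 0 ≤ ‖w‖ := norm_nonneg w
  field_simp
  nlinarith [sq_nonneg (‖v‖ * ‖w‖ - ⟪v, w⟫), mul_nonneg h (sub_nonneg.mpr h1)]
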